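/- Let p > 1, G > 0 and E₀ > 0, and let (E_j) be a sequence of positive reals satisfying E_{j+1} ≥ G E_j^p / (2p)^j for all j ≥ 0. Then there exists a real constant q, depending only on p and G, such that E_j ≥ exp(p^j (log E₀ + q)) for all j ≥ 0. -/

import Mathlib

open MeasureTheory Metric Real Set

noncomputable section

/-- Euclidean 3-space. -/
abbrev E3 : Type := EuclideanSpace ℝ (Fin 3)

/-- surface measure on the unit sphere of `ℝ³` -/
def sphMeasure : Measure (sphere (0 : E3) 1) := (volume : Measure E3).toSphere

/-- surface integral over the unit sphere -/
def sphInt (h : E3 → ℝ) : ℝ := ∫ ξ : sphere (0 : E3) 1, h (ξ : E3) ∂sphMeasure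

/-- The Duhamel-type integral operator `L`. -/
def Lop (p : ℝ) (w : E3 → ℝ → ℝ) (x : E3) (t : ℝ) : ℝ :=
  (1 / (4 * π)) * ∫ s in (0:ℝ)..t,
    (t - s) * (1 + s) ^ (-(p - 1)) * sphInt (fun η => w (x + (t - s) • η) s)

/-- Kirchhoff's solution of the free wave equation with data `(ε f, ε (f + g))`. -/
def kirch (ε : ℝ) (f g : E3 → ℝ) (x : E3) (t : ℝ) : ℝ :=
  ε * (t / (4 * π)) * sphInt (fun ξ => f (x + t • ξ) + g (x + t • ξ)) +
    ε * deriv (fun τ : ℝ => (τ / (4 * π)) * sphInt (fun ξ => f (x + τ • ξ))) t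

/-- `γ(p,5) = 2 + 6p - 4p²` -/
def gam5 (p : ℝ) : ℝ := 2 + 6 * p - 4 * p ^ 2

/-- Strauss exponent `p_S(5)` -/
def pS5 : ℝ := (3 + Real.sqrt 17) / 4

/-- the exponent `q` -/
def qexp (p : ℝ) : ℝ := max (2 * (p - 1)) 1

/-- the exponent `q̄` -/
def qbar (p : ℝ) : ℝ := max 0 (2 * p - 3)

/-- the weight `w(r,t)` -/
def wgt (p ρ r t : ℝ) : ℝ :=
  if p = 3 / 2 then
    ρ⁻¹ * (t + r + 2 * ρ) * (Real.log (2 * (t + r + 2 * ρ) / (t - r + 2 * ρ)))⁻¹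
  else
    ρ ^ (-(2 * (p - 1))) * (t + r + 2 * ρ) ^ qexp p * (t - r + 2 * ρ) ^ qbar p

/-- the weighted `L^∞` norm on `ℝ³ × [0,T)` -/
def wnorm (p ρ T : ℝ) (u : E3 → ℝ → ℝ) : ℝ :=
  sSup {y : ℝ | ∃ x : E3, ∃ t : ℝ, 0 ≤ t ∧ t < T ∧ y = wgt p ρ ‖x‖ t * |u x t|}

/-- the norm `‖u⁰‖₀` -/
def wnorm0 (ρ : ℝ) (u : E3 → ℝ → ℝ) : ℝ :=
  sSup {y : ℝ | ∃ x : E3, ∃ t : ℝ, 0 ≤ t ∧ y = ρ⁻¹ * (t + ‖x‖ + 2 * ρ) * |u x t|}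

/-- the quantity `D(T)` -/
def DT (p ρ T : ℝ) : ℝ :=
  if p < pS5 then ((2 * T + 3 * ρ) / ρ) ^ (gam5 p / 2)
  else if p = pS5 then Real.log ((T + 2 * ρ) / ρ)
  else 1

/-- spherical mean of a function on `ℝ³ × [0,T)` -/
def sphMean (v : E3 → ℝ → ℝ) (r t : ℝ) : ℝ :=
  (1 / (4 * π)) * sphInt (fun ξ => v (r • ξ) t)

/-- the region `R(r,t)` -/
def Rset (r t : ℝ) : Set (ℝ × ℝ) :=
  {q | t - r ≤ q.2 + q.1 ∧ q.2 + q.1 ≤ t + r ∧ q.2 - q.1 ≤ t - r ∧ 0 ≤ q.2}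

/-- `m(p)` -/
def mexp (p : ℝ) : ℕ := if p < 2 then 1 else 2

end

/-- sequences satisfying `E_{j+1} ≥ G E_j^p / (2p)^j` obey the
doubly exponential lower bound `E_j ≥ exp(p^j (log E₀ + q))` for a constant `q`
depending only on `p` and `G`. -/
theorem iteration_sequence_lower_bound' (p G : ℝ) (hp : 1 < p) (hG : 0 < G) :
    ∃ q : ℝ, ∀ E : ℕ → ℝ, (∀ j, 0 < E j) →
      (∀ j : ℕ, G * E j ^ p / (2 * p) ^ (j : ℝ) ≤ E (j + 1)) →
      ∀ j : ℕ, Real.exp (p ^ (j : ℝ) * (Real.log (E 0) + q)) ≤ E j := by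
  have hp0 : (0:ℝ) < p := by linarith
  have hp1 : (0:ℝ) < p - 1 := by linarith
  have h2p : (0:ℝ) < 2 * p := by linarith
  set L := Real.log (2 * p) with hL
  have hLpos : 0 < L := Real.log_pos (by linarith)
  set g := Real.log G with hg
  set α := L / (p - 1) with hα
  set β := (α - g) / (p - 1) with hβ
  have hαpos : 0 < α := div_pos hLpos hp1
  refine ⟨-|β|, ?_⟩
  intro E hE hrec
  -- key invariant
  have key : ∀ j : ℕ, p ^ j * Real.log (E 0) + α * j + β * (1 - p ^ j)
      ≤ Real.log (E j) := by
    intro j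
    induction j with
    | zero => simp
    | succ j ih =>
      have hEjp : (0:ℝ) < E j ^ p := Real.rpow_pos_of_pos (hE j) p
      have h2pj : (0:ℝ) < (2 * p) ^ (j:ℝ) := Real.rpow_pos_of_pos h2p _
      have hstep : g + p * Real.log (E j) - (j : ℝ) * L ≤ Real.log (E (j + 1)) := by
        have h1 : Real.log (G * E j ^ p / (2 * p) ^ (j : ℝ)) ≤ Real.log (E (j + 1)) := by
          apply Real.log_le_log (div_pos (mul_pos hG hEjp) h2pj) (hrec j)
        rw [Real.log_div (mul_pos hG hEjp).ne' h2pj.ne',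
          Real.log_mul hG.ne' hEjp.ne', Real.log_rpow h2p, Real.log_rpow (hE j)] at h1
        linarith [h1]
      have hαe : α * (p - 1) = L := by rw [hα, div_mul_cancel₀ _ hp1.ne']
      have hβe : β * (p - 1) = α - g := by rw [hβ, div_mul_cancel₀ _ hp1.ne']
      have hge : g = α - β * (p - 1) := by linarith
      have expand : p * (p ^ j * Real.log (E 0) + α * (j:ℝ) + β * (1 - p ^ j))
          + g - (j:ℝ) * L
          = p ^ (j + 1) * Real.log (E 0) + α * ((j:ℝ) + 1) + β * (1 - p ^ (j + 1)) := by
        rw [← hαe, hge]; ring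
      have hmul := mul_le_mul_of_nonneg_left ih hp0.le
      push_cast
      linarith [hmul, hstep, expand.le, expand.ge]
  intro j
  have hEj := hE j
  rw [show E j = Real.exp (Real.log (E j)) from (Real.exp_log hEj).symm]
  apply Real.exp_le_exp.mpr
  rw [Real.rpow_natCast]
  have hpj : (1:ℝ) ≤ p ^ j := one_le_pow₀ hp.le
  have hk := key j
  have habs1 : β ≤ |β| := le_abs_self β
  have habs2 : -|β| ≤ β := neg_abs_le β
  have hjnn : (0:ℝ) ≤ (j:ℝ) := Nat.cast_nonneg j
  nlinarith [mul_nonneg hαpos.le hjnn]
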